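/- Let R be a commutative ring whose underlying additive group is a free ℤ-module of finite rank. Then the set of roots of unity of R is finite. -/

import Mathlib

section Aux
variable {R : Type*} [CommRing R] [Module.Free ℤ R] [Module.Finite ℤ R]

private lemma cancel3 (s : ℕ) {u v : R} (h : (3:R)^s * u = (3:R)^s * v) : u = v := by
  have h' : ((3:ℤ)^s) • u = ((3:ℤ)^s) • v := by
    rw [zsmul_eq_mul, zsmul_eq_mul]; push_cast; exact h
  exact smul_right_injective R (pow_ne_zero s (by norm_num : (3:ℤ) ≠ 0)) h'

private lemma binom_aux (t : R) (m : ℕ) : ∃ d : R, (1+t)^m = 1 + (m:R)*t + t^2*d := by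
  induction m with
  | zero => exact ⟨0, by simp⟩
  | succ n ih =>
    obtain ⟨d, hd⟩ := ih
    refine ⟨(n:R) + d + t*d, ?_⟩
    rw [pow_succ, hd]; push_cast; ring

/-- An element of R divisible by all powers of 3 is zero. -/
private lemma all_pow_dvd (x : R) (h : ∀ s : ℕ, ∃ c : R, x = (3:R)^s * c) : x = 0 := by
  classical
  let b := Module.Free.chooseBasis ℤ R
  have hco : ∀ i, b.repr x i = 0 := by
    intro i
    have hdvd : ∀ s : ℕ, (3:ℤ)^s ∣ b.repr x i := by
      intro s
      obtain ⟨c, hc⟩ := h s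
      have : x = ((3:ℤ)^s) • c := by rw [zsmul_eq_mul]; push_cast; exact hc
      refine ⟨b.repr c i, ?_⟩
      rw [this, map_smul]; simp
    by_contra hne
    set n := b.repr x i with hn
    have h1 : (3:ℤ)^(n.natAbs) ∣ |n| := (dvd_abs _ _).mpr (hdvd _)
    have h2 : (3:ℤ)^(n.natAbs) ≤ |n| := Int.le_of_dvd (abs_pos.mpr hne) h1
    have h3 : (n.natAbs : ℤ) < (3:ℤ)^(n.natAbs) := by
      have := Nat.lt_two_pow_self (n := n.natAbs)
      have h4 : (2:ℕ)^n.natAbs ≤ 3^n.natAbs := Nat.pow_le_pow_left (by norm_num) _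
      exact_mod_cast lt_of_lt_of_le this h4
    rw [Int.abs_eq_natAbs] at h2
    omega
  have : b.repr x = 0 := Finsupp.ext hco
  have := b.repr.map_eq_zero_iff.mp (by simpa using this)
  exact this

/-- Descent step for elements of order coprime to 3. -/
private lemma step_cop {m : ℕ} (hm3 : ¬ 3 ∣ m) {z : R} (hz : z^m = 1)
    {s : ℕ} (hs : 1 ≤ s) {c : R} (hc : z = 1 + (3:R)^s * c) :
    ∃ c' : R, z = 1 + (3:R)^(s+1) * c' := by
  obtain ⟨d, hd⟩ := binom_aux ((3:R)^s * c) m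
  rw [← hc, hz] at hd
  have key : (3:R)^s * ((m:R)*c) = (3:R)^s * (-((3:R)^s * (c^2*d))) := by
    have : (m:R)*((3:R)^s*c) + ((3:R)^s*c)^2*d = 0 := by linear_combination -hd
    linear_combination this
  have hmc : (m:R)*c = -((3:R)^s * (c^2*d)) := cancel3 s key
  -- coprimality: u * m + v * 3^s = 1
  have hcop : IsCoprime (m:ℤ) ((3:ℤ)^s) := by
    rw [Int.isCoprime_iff_gcd_eq_one]
    have h1 : Nat.Coprime 3 m := (Nat.prime_three.coprime_iff_not_dvd).mpr hm3
    have h2 : Nat.Coprime m (3^s) := (h1.symm).pow_right s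
    rw [show ((3:ℤ)^s) = ((3^s : ℕ) : ℤ) by push_cast; ring, Int.gcd_natCast_natCast]
    exact h2
  obtain ⟨u, v, huv⟩ := hcop
  have hc3 : c = (3:R)^s * ((v:R)*c - (u:R)*(c^2*d)) := by
    have h1 : ((u * m + v * 3^s : ℤ) : R) = 1 := by rw [huv]; norm_num
    push_cast at h1
    calc c = ((u:R)*(m:R) + (v:R)*(3:R)^s) * c := by rw [h1, one_mul]
    _ = (u:R)*((m:R)*c) + (v:R)*((3:R)^s*c) := by ring
    _ = (u:R)*(-((3:R)^s * (c^2*d))) + (v:R)*((3:R)^s*c) := by rw [hmc]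
    _ = (3:R)^s * ((v:R)*c - (u:R)*(c^2*d)) := by ring
  obtain ⟨s', rfl⟩ := Nat.exists_eq_add_of_le hs
  refine ⟨(3:R)^s' * ((v:R)*c - (u:R)*(c^2*d)), ?_⟩
  linear_combination hc + (3:R)^(1+s') * hc3

/-- Descent step for elements of order 3. -/
private lemma step_three {z : R} (hz : z^3 = 1)
    {s : ℕ} (hs : 1 ≤ s) {c : R} (hc : z = 1 + (3:R)^s * c) :
    ∃ c' : R, z = 1 + (3:R)^(s+1) * c' := by
  obtain ⟨s', rfl⟩ := Nat.exists_eq_add_of_le hs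
  have key : (3:R)^(1+s'+1) * (c + (3:R)^(1+s')*c^2 + (3:R)^(2*s'+1)*c^3)
      = (3:R)^(1+s'+1) * 0 := by
    have : (1 + (3:R)^(1+s') * c)^3 = 1 := by rw [← hc]; exact hz
    linear_combination this
  have h0 : c + (3:R)^(1+s')*c^2 + (3:R)^(2*s'+1)*c^3 = 0 := cancel3 _ key
  have hc' : c = 3 * (-((3:R)^s'*c^2 + (3:R)^(2*s')*c^3)) := by linear_combination h0
  refine ⟨-((3:R)^s'*c^2 + (3:R)^(2*s')*c^3), ?_⟩
  linear_combination hc + (3:R)^(1+s') * hc'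

/-- Minkowski: a torsion element ≡ 1 mod 3 is 1. -/
private lemma key_lemma : ∀ m : ℕ, 0 < m → ∀ z a : R, z ^ m = 1 → z = 1 + 3 * a → z = 1 := by
  intro m
  induction m using Nat.strong_induction_on with
  | _ m ih =>
    intro hm z a hz ha
    by_cases h3 : 3 ∣ m
    · obtain ⟨m₁, rfl⟩ := h3
      have hm₁ : 0 < m₁ := by omega
      have hz3 : (z^3)^m₁ = 1 := by rw [← pow_mul]; exact hz
      have hz3' : z^3 = 1 + 3 * (3*a + 9*a^2 + 9*a^3) := by rw [ha]; ring
      have hcube : z^3 = 1 := ih m₁ (by omega) hm₁ _ _ hz3 hz3'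
      -- now z has order dividing 3, z ≡ 1 mod 3
      have hdesc : ∀ s : ℕ, 1 ≤ s → ∃ c : R, z = 1 + (3:R)^s * c := by
        intro s hs
        induction s with
        | zero => omega
        | succ n ihn =>
          rcases Nat.eq_or_lt_of_le hs with h | h
          · have hn : n = 0 := by omega
            subst hn
            exact ⟨a, by rw [ha]; norm_num⟩
          · obtain ⟨c, hc⟩ := ihn (by omega)
            exact step_three hcube (by omega) hc
      have : z - 1 = 0 := by
        apply all_pow_dvd
        intro s
        rcases Nat.eq_zero_or_pos s with rfl | hs
        · exact ⟨z - 1, by norm_num⟩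
        · obtain ⟨c, hc⟩ := hdesc s hs
          exact ⟨c, by rw [hc]; ring⟩
      exact sub_eq_zero.mp this
    · have hdesc : ∀ s : ℕ, 1 ≤ s → ∃ c : R, z = 1 + (3:R)^s * c := by
        intro s hs
        induction s with
        | zero => omega
        | succ n ihn =>
          rcases Nat.eq_or_lt_of_le hs with h | h
          · have hn : n = 0 := by omega
            subst hn
            exact ⟨a, by rw [ha]; norm_num⟩
          · obtain ⟨c, hc⟩ := ihn (by omega)
            exact step_cop h3 hz (by omega) hc
      have : z - 1 = 0 := by
        apply all_pow_dvd
        intro s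
        rcases Nat.eq_zero_or_pos s with rfl | hs
        · exact ⟨z - 1, by norm_num⟩
        · obtain ⟨c, hc⟩ := hdesc s hs
          exact ⟨c, by rw [hc]; ring⟩
      exact sub_eq_zero.mp this

end Aux

/-- If the additive group of a commutative ring `R` is a free ℤ-module of
finite rank, then the set of roots of unity of `R` (units of finite multiplicative
order) is finite. -/
theorem stmt_6 (R : Type*) [CommRing R] [Module.Free ℤ R] [Module.Finite ℤ R] :
    {x : R | ∃ m : ℕ, 0 < m ∧ x ^ m = 1}.Finite := by
  classical
  set S := {x : R | ∃ m : ℕ, 0 < m ∧ x ^ m = 1} with hS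
  let b := Module.Free.chooseBasis ℤ R
  let f : R → (Module.Free.ChooseBasisIndex ℤ R → ZMod 3) :=
    fun x i => ((b.repr x i : ℤ) : ZMod 3)
  have hfin : (f '' S).Finite := Set.toFinite _
  refine Set.Finite.of_finite_image hfin ?_
  rintro x ⟨mx, hmx, hx⟩ y ⟨my, hmy, hy⟩ hfxy
  -- x - y is divisible by 3 in R
  have hdvd : ∀ i, (3:ℤ) ∣ b.repr (x - y) i := by
    intro i
    have : ((b.repr x i : ℤ) : ZMod 3) = ((b.repr y i : ℤ) : ZMod 3) := congrFun hfxy i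
    have h0 : (((b.repr x i - b.repr y i : ℤ)) : ZMod 3) = 0 := by
      push_cast
      rw [this]; ring
    have := (ZMod.intCast_zmod_eq_zero_iff_dvd _ 3).mp h0
    simpa [map_sub] using this
  choose q hq using hdvd
  set c : R := ∑ i, q i • b i with hc
  have hxy : x - y = 3 * c := by
    have h3c : (3:R) * c = ∑ i, b.repr (x - y) i • b i := by
      rw [hc, Finset.mul_sum]
      refine Finset.sum_congr rfl fun i _ => ?_
      rw [hq i]
      rw [show (3:R) * (q i • b i) = ((3 * q i : ℤ)) • b i by
        rw [zsmul_eq_mul, zsmul_eq_mul]; push_cast; ring]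
    rw [h3c, Module.Basis.sum_repr]
  -- work with z = x * y^(my-1)
  set w : R := y ^ (my - 1) with hw
  have hyw : y * w = 1 := by
    rw [hw, ← pow_succ']
    have : my - 1 + 1 = my := by omega
    rw [this]; exact hy
  have hzpow : (x * w) ^ (mx * my) = 1 := by
    have hxpow : x ^ (mx * my) = 1 := by
      rw [pow_mul, hx, one_pow]
    have hwpow : w ^ (mx * my) = 1 := by
      rw [hw, ← pow_mul]
      have : (my - 1) * (mx * my) = my * ((my - 1) * mx) := by ring
      rw [this, pow_mul, hy, one_pow]
    rw [mul_pow, hxpow, hwpow, one_mul]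
  have hzform : x * w = 1 + 3 * (c * w) := by
    have : x * w = (y + (x - y)) * w := by ring
    rw [this, hxy]
    have : (y + 3 * c) * w = y * w + 3 * (c * w) := by ring
    rw [this, hyw]
  have hz1 : x * w = 1 := key_lemma (mx * my) (Nat.mul_pos hmx hmy) _ _ hzpow hzform
  calc x = x * (y * w) := by rw [hyw, mul_one]
  _ = y * (x * w) := by ring
  _ = y := by rw [hz1, mul_one]
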